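/- For every δ ∈ (0,1) and every even m ∈ ℤ₊ with m ≥ (16K₁²/ρ²)·log(2n/δ), the following holds with probability at least 1 − δ over the i.i.d. draw of (θ_r^{(0)})_{r=1}^{m/2} from μ₀^{⊗(m/2)} (with the symmetric initialization Θ^{(0)}): for every Θ ∈ (ℝ^d)^m with ‖Θ − Θ^{(0)}‖_{2,1} ≤ mρ/(4K₂), one has Q(Θ) = ‖(1/n) Σ_{i=1}^n g_Θ(x_i)·∇_Θ f_Θ(x_i)‖₂² ≥ (ρ²/(16 m^{2β−1}))·‖∇_f L(f_Θ)‖_{L1}². -/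

import Mathlib

open MeasureTheory Real Finset
open scoped RealInnerProductSpace BigOperators

noncomputable section

/-- Two-layer network `f_Θ(x) = m^{-β} ∑_r a_r σ(θ_rᵀ x)`. -/
def fnet (d m : ℕ) (β : ℝ) (σ : ℝ → ℝ) (a : Fin m → ℝ)
    (Θ : Fin m → EuclideanSpace ℝ (Fin d)) (x : EuclideanSpace ℝ (Fin d)) : ℝ :=
  (m : ℝ) ^ (-β) * ∑ r, a r * σ ⟪Θ r, x⟫

/-- Functional-gradient value `g_Θ(x_i) = -y_i/(1+exp(y_i f_Θ(x_i)))`. -/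
def gval (d m n : ℕ) (β : ℝ) (σ : ℝ → ℝ) (a : Fin m → ℝ)
    (x : Fin n → EuclideanSpace ℝ (Fin d)) (y : Fin n → ℝ)
    (Θ : Fin m → EuclideanSpace ℝ (Fin d)) (i : Fin n) : ℝ :=
  - y i / (1 + Real.exp (y i * fnet d m β σ a Θ (x i)))

/-- Empirical logistic loss `L(Θ)`. -/
def eloss (d m n : ℕ) (β : ℝ) (σ : ℝ → ℝ) (a : Fin m → ℝ)
    (x : Fin n → EuclideanSpace ℝ (Fin d)) (y : Fin n → ℝ)
    (Θ : Fin m → EuclideanSpace ℝ (Fin d)) : ℝ :=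
  (1 / n : ℝ) * ∑ i, Real.log (1 + Real.exp (- y i * fnet d m β σ a Θ (x i)))

/-- `L¹(ν_n)`-norm of the functional gradient. -/
def L1norm (d m n : ℕ) (β : ℝ) (σ : ℝ → ℝ) (a : Fin m → ℝ)
    (x : Fin n → EuclideanSpace ℝ (Fin d)) (y : Fin n → ℝ)
    (Θ : Fin m → EuclideanSpace ℝ (Fin d)) : ℝ :=
  (1 / n : ℝ) * ∑ i, |gval d m n β σ a x y Θ i|

/-- Parameter gradient `∇_Θ L(Θ)`. -/
def gradL (d m n : ℕ) (β : ℝ) (σ : ℝ → ℝ) (a : Fin m → ℝ)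
    (x : Fin n → EuclideanSpace ℝ (Fin d)) (y : Fin n → ℝ)
    (Θ : Fin m → EuclideanSpace ℝ (Fin d)) : Fin m → EuclideanSpace ℝ (Fin d) :=
  fun r => (1 / n : ℝ) • ∑ i,
    (gval d m n β σ a x y Θ i * (a r * (m : ℝ) ^ (-β) * deriv σ ⟪Θ r, x i⟫)) • x i

/-- Squared Euclidean norm of a parameter block `‖Θ‖₂²`. -/
def nsq (d m : ℕ) (Θ : Fin m → EuclideanSpace ℝ (Fin d)) : ℝ := ∑ r, ‖Θ r‖ ^ 2

/-- Euclidean norm of a parameter block `‖Θ‖₂`. -/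
def en2 (d m : ℕ) (Θ : Fin m → EuclideanSpace ℝ (Fin d)) : ℝ := Real.sqrt (nsq d m Θ)

/-- The `(2,1)`-norm `‖Θ‖_{2,1} = ∑_r ‖θ_r‖₂`. -/
def n21 (d m : ℕ) (Θ : Fin m → EuclideanSpace ℝ (Fin d)) : ℝ := ∑ r, ‖Θ r‖

/-- Gradient-descent iterates `Θ^{(t+1)} = Θ^{(t)} - η ∇_Θ L(Θ^{(t)})`. -/
def gdSeq (d m n : ℕ) (β : ℝ) (σ : ℝ → ℝ) (a : Fin m → ℝ)
    (x : Fin n → EuclideanSpace ℝ (Fin d)) (y : Fin n → ℝ) (η : ℝ)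
    (Θ0 : Fin m → EuclideanSpace ℝ (Fin d)) : ℕ → Fin m → EuclideanSpace ℝ (Fin d)
  | 0 => Θ0
  | t + 1 => fun r => gdSeq d m n β σ a x y η Θ0 t r
      - η • gradL d m n β σ a x y (gdSeq d m n β σ a x y η Θ0 t) r

/-- Kernel-smoothing quantity `Q(Θ) = ‖(1/n) ∑_i g_Θ(x_i) ∇_Θ f_Θ(x_i)‖₂²`. -/
def Qker (d m n : ℕ) (β : ℝ) (σ : ℝ → ℝ) (a : Fin m → ℝ)
    (x : Fin n → EuclideanSpace ℝ (Fin d)) (y : Fin n → ℝ)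
    (Θ : Fin m → EuclideanSpace ℝ (Fin d)) : ℝ :=
  nsq d m (fun r => (1 / n : ℝ) • ∑ i,
    (gval d m n β σ a x y Θ i * (a r * (m : ℝ) ^ (-β) * deriv σ ⟪Θ r, x i⟫)) • x i)

/-- Symmetric signs: `a_r = 1` for `r < k`, `a_r = -1` for `r ≥ k` (with `m = 2k`). -/
def symSigns (k : ℕ) : Fin (2 * k) → ℝ := fun r => if (r : ℕ) < k then 1 else -1

/-- Symmetric initialization: `θ^{(0)}_{r+k} = θ^{(0)}_r` (with `m = 2k`). -/
def symInit (d k : ℕ) (ω : Fin k → EuclideanSpace ℝ (Fin d)) :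
    Fin (2 * k) → EuclideanSpace ℝ (Fin d) :=
  fun r => if h : (r : ℕ) < k then ω ⟨r, h⟩ else ω ⟨(r : ℕ) - k, by have := r.isLt; omega⟩

/-- Ramp loss with margin `γ`. -/
def ramp (γ v : ℝ) : ℝ := if v < 0 then 1 else if v ≤ γ then 1 - v / γ else 0

/-- Empirical Rademacher complexity of the ramp-loss class over the ball of radius `D`
around `Θ0`. -/
def rade (d m n : ℕ) (β γ D : ℝ) (σ : ℝ → ℝ) (a : Fin m → ℝ)
    (x : Fin n → EuclideanSpace ℝ (Fin d)) (y : Fin n → ℝ)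
    (Θ0 : Fin m → EuclideanSpace ℝ (Fin d)) : ℝ :=
  (1 / n : ℝ) * (1 / 2 ^ n : ℝ) * ∑ ε : Fin n → Bool,
    sSup {z : ℝ | ∃ Θ : Fin m → EuclideanSpace ℝ (Fin d),
      en2 d m (fun r => Θ r - Θ0 r) ≤ D ∧
      z = ∑ i, (if ε i then (1 : ℝ) else -1) * ramp γ (y i * fnet d m β σ a Θ (x i))}

/-- Neural tangent kernel. -/
def kNTK (d : ℕ) (σ : ℝ → ℝ) (μ₀ : Measure (EuclideanSpace ℝ (Fin d)))
    (x x' : EuclideanSpace ℝ (Fin d)) : ℝ :=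
  ∫ θ, deriv σ ⟪θ, x⟫ * deriv σ ⟪θ, x'⟫ * ⟪x, x'⟫ ∂μ₀

lemma hoeff_scalar (p : ℝ) (hp0 : 0 ≤ p) (hp1 : p ≤ 1) (u : ℝ) :
    Real.log (1 - p + p * Real.exp u) ≤ p * u + u ^ 2 / 8 := by
  set g : ℝ → ℝ := fun w => 1 - p + p * Real.exp w with hg
  have hgpos : ∀ w, 0 < g w := by
    intro w
    have hge : g w = 1 - p + p * Real.exp w := rfl
    rcases eq_or_lt_of_le hp0 with h | h
    · simp [hge, ← h]
    · have := Real.exp_pos w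
      nlinarith
  have hgd : ∀ w, HasDerivAt g (p * Real.exp w) w := by
    intro w
    exact ((Real.hasDerivAt_exp w).const_mul p).const_add (1 - p)
  set φ : ℝ → ℝ := fun w => p * Real.exp w / g w with hφ
  have hfd : ∀ w, HasDerivAt (fun z => Real.log (g z)) (φ w) w := by
    intro w
    simpa [hφ] using (hgd w).log (ne_of_gt (hgpos w))
  have hφd : ∀ w, HasDerivAt φ (p * (1 - p) * Real.exp w / g w ^ 2) w := by
    intro w
    have := ((Real.hasDerivAt_exp w).const_mul p).div (hgd w) (ne_of_gt (hgpos w))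
    refine HasDerivAt.congr_deriv this ?_
    rw [show g w = 1 - p + p * Real.exp w from rfl]
    ring
  have hφ'le : ∀ w, p * (1 - p) * Real.exp w / g w ^ 2 ≤ 1 / 4 := by
    intro w
    rw [div_le_iff₀ (pow_pos (hgpos w) 2)]
    have h1 : 0 ≤ (p * Real.exp w - (1 - p)) ^ 2 := sq_nonneg _
    have : g w = 1 - p + p * Real.exp w := rfl
    nlinarith [Real.exp_pos w]
  set F : ℝ → ℝ := fun w => p * w + w ^ 2 / 8 - Real.log (g w) with hF
  set F' : ℝ → ℝ := fun w => p + w / 4 - φ w with hF'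
  have hFd : ∀ w, HasDerivAt F (F' w) w := by
    intro w
    have h1 : HasDerivAt (fun z : ℝ => p * z + z ^ 2 / 8) (p + w / 4) w := by
      have := ((hasDerivAt_pow 2 w).div_const 8).const_add 0
      have h2 := (hasDerivAt_id w).const_mul p
      exact (h2.add ((hasDerivAt_pow 2 w).div_const 8)).congr_deriv (by ring)
    exact h1.sub (hfd w)
  have hF0 : F 0 = 0 := by simp [hF, hg]
  have hF'0 : F' 0 = 0 := by simp [hF', hφ, hg]
  have hF'mono : Monotone F' := by
    apply monotone_of_deriv_nonneg
    · intro w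
      exact (((hasDerivAt_id w).div_const 4).const_add p).sub (hφd w) |>.differentiableAt
    · intro w
      have hd : HasDerivAt F' (1 / 4 - p * (1 - p) * Real.exp w / g w ^ 2) w := by
        have h1 : HasDerivAt (fun z : ℝ => p + z / 4) (1 / 4) w := by
          simpa using ((hasDerivAt_id w).div_const 4).const_add p
        exact h1.sub (hφd w)
      rw [hd.deriv]
      linarith [hφ'le w]
  have hFcont : Continuous F := by
    have : Differentiable ℝ F := fun w => (hFd w).differentiableAt
    exact this.continuous
  have key : 0 ≤ F u := by
    rcases le_total 0 u with h | h
    · have := monotoneOn_of_deriv_nonneg (convex_Ici 0) (hFcont.continuousOn)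
        (fun w _ => (hFd w).differentiableAt.differentiableWithinAt)
        (fun w hw => by
          rw [(hFd w).deriv]
          have : (0:ℝ) ≤ w := le_of_lt (by simpa using hw)
          simpa [hF'0] using hF'mono this) (le_refl (0:ℝ) : (0:ℝ) ∈ Set.Ici 0) h h
      rw [hF0] at this
      exact this
    · have := antitoneOn_of_deriv_nonpos (convex_Iic 0) (hFcont.continuousOn)
        (fun w _ => (hFd w).differentiableAt.differentiableWithinAt)
        (fun w hw => by
          rw [(hFd w).deriv]
          have hw0 : w ≤ (0:ℝ) := le_of_lt (by simpa using hw)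
          simpa [hF'0] using hF'mono hw0) h (le_refl (0:ℝ) : (0:ℝ) ∈ Set.Iic 0) h
      rw [hF0] at this
      exact this
  have h2 : 0 ≤ p * u + u ^ 2 / 8 - Real.log (1 - p + p * Real.exp u) := key
  linarith

lemma hoeff_mgf {α : Type*} [MeasurableSpace α] (μ : Measure α) [IsProbabilityMeasure μ]
    (h : α → ℝ) (hmeas : Measurable h) (c : ℝ) (hc : 0 < c) (hbd : ∀ θ, |h θ| ≤ c) (t : ℝ) :
    ∫ θ, Real.exp (t * ((∫ θ', h θ' ∂μ) - h θ)) ∂μ ≤ Real.exp (t ^ 2 * c ^ 2 / 2) := by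
  have hint : MeasureTheory.Integrable h μ := by
    apply (MeasureTheory.integrable_const c).mono' hmeas.aestronglyMeasurable
    exact Filter.Eventually.of_forall fun θ => by simpa using hbd θ
  set M : ℝ := ∫ θ', h θ' ∂μ with hM
  have hMbd : |M| ≤ c := by
    have h1 : |M| ≤ ∫ θ', |h θ'| ∂μ := by
      simpa [Real.norm_eq_abs] using MeasureTheory.norm_integral_le_integral_norm (μ := μ) h
    have h2 : ∫ θ', |h θ'| ∂μ ≤ ∫ _θ', c ∂μ :=
      MeasureTheory.integral_mono hint.abs (MeasureTheory.integrable_const c) fun θ => hbd θ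
    have h3 : ∫ _θ', c ∂μ = c := by simp
    linarith
  set A : ℝ := Real.exp (t * M) * ((Real.exp (t * c) + Real.exp (-(t * c))) / 2) with hA
  set B : ℝ := Real.exp (t * M) * ((Real.exp (-(t * c)) - Real.exp (t * c)) / (2 * c)) with hB
  have hpt : ∀ θ, Real.exp (t * (M - h θ)) ≤ A + B * h θ := by
    intro θ
    have hx := hbd θ
    have ha : (0:ℝ) ≤ (c - h θ) / (2 * c) := by
      rw [le_div_iff₀ (by linarith)]; rw [abs_le] at hx; linarith
    have hb : (0:ℝ) ≤ (c + h θ) / (2 * c) := by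
      rw [le_div_iff₀ (by linarith)]; rw [abs_le] at hx; linarith
    have hab : (c - h θ) / (2 * c) + (c + h θ) / (2 * c) = 1 := by field_simp; ring
    have hcvx := convexOn_exp.2 (Set.mem_univ (t * c)) (Set.mem_univ (-(t * c))) ha hb hab
    have heq : ((c - h θ) / (2 * c)) • (t * c) + ((c + h θ) / (2 * c)) • (-(t * c))
        = -(t * h θ) := by
      simp only [smul_eq_mul]
      field_simp
      ring
    rw [heq] at hcvx
    have : Real.exp (t * (M - h θ)) = Real.exp (t * M) * Real.exp (-(t * h θ)) := by
      rw [← Real.exp_add]; ring_nf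
    rw [this]
    calc Real.exp (t * M) * Real.exp (-(t * h θ))
        ≤ Real.exp (t * M) * ((c - h θ) / (2 * c) * Real.exp (t * c)
          + (c + h θ) / (2 * c) * Real.exp (-(t * c))) := by
          apply mul_le_mul_of_nonneg_left _ (Real.exp_nonneg _)
          simpa [smul_eq_mul] using hcvx
    _ = A + B * h θ := by rw [hA, hB]; field_simp; ring
  have hlhs_int : MeasureTheory.Integrable (fun θ => Real.exp (t * (M - h θ))) μ := by
    apply (MeasureTheory.integrable_const (Real.exp (|t| * (|M| + c)))).mono'
      (((measurable_const.sub hmeas).const_mul t).exp.aestronglyMeasurable)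
    refine Filter.Eventually.of_forall fun θ => ?_
    rw [Real.norm_eq_abs, Real.abs_exp]
    apply Real.exp_le_exp.2
    have := hbd θ
    have h1 : |t * (M - h θ)| ≤ |t| * (|M| + c) := by
      rw [abs_mul]
      apply mul_le_mul_of_nonneg_left _ (abs_nonneg t)
      calc |M - h θ| ≤ |M| + |h θ| := abs_sub _ _
      _ ≤ |M| + c := by linarith
    exact le_trans (le_abs_self (t * (M - h θ))) h1
  have hrhs_int : MeasureTheory.Integrable (fun θ => A + B * h θ) μ :=
    (MeasureTheory.integrable_const A).add (hint.const_mul B)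
  have hle1 : ∫ θ, Real.exp (t * (M - h θ)) ∂μ ≤ A + B * M := by
    calc ∫ θ, Real.exp (t * (M - h θ)) ∂μ ≤ ∫ θ, A + B * h θ ∂μ :=
      MeasureTheory.integral_mono hlhs_int hrhs_int hpt
    _ = A + B * M := by
      rw [MeasureTheory.integral_add (MeasureTheory.integrable_const A) (hint.const_mul B),
        MeasureTheory.integral_const_mul]
      simp [hM, hA, MeasureTheory.integral_const_mul]
  refine hle1.trans ?_
  set p : ℝ := (c + M) / (2 * c) with hp
  set u : ℝ := -(2 * t * c) with hu
  have hp0 : 0 ≤ p := by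
    rw [hp]; apply div_nonneg _ (by linarith)
    rw [abs_le] at hMbd; linarith
  have hp1 : p ≤ 1 := by
    rw [hp, div_le_one (by linarith)]
    rw [abs_le] at hMbd; linarith
  have hABeq : A + B * M = Real.exp (t * M + t * c) * (1 - p + p * Real.exp u) := by
    rw [hA, hB, hp, show u = -(t * c) + -(t * c) by ring, Real.exp_add (t*M) (t*c),
      Real.exp_add (-(t*c)) (-(t*c)), Real.exp_neg]
    field_simp
    ring
  rw [hABeq]
  have hgpos : 0 < 1 - p + p * Real.exp u := by
    rcases eq_or_lt_of_le hp0 with h' | h'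
    · simp [← h']
    · nlinarith [Real.exp_pos u]
  have hlog := hoeff_scalar p hp0 hp1 u
  have : 1 - p + p * Real.exp u ≤ Real.exp (p * u + u ^ 2 / 8) :=
    (Real.log_le_iff_le_exp hgpos).1 hlog
  calc Real.exp (t * M + t * c) * (1 - p + p * Real.exp u)
      ≤ Real.exp (t * M + t * c) * Real.exp (p * u + u ^ 2 / 8) :=
        mul_le_mul_of_nonneg_left this (Real.exp_nonneg _)
  _ = Real.exp (t * M + t * c + (p * u + u ^ 2 / 8)) := by rw [← Real.exp_add]
  _ = Real.exp (t ^ 2 * c ^ 2 / 2) := by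
      congr 1
      rw [hp, hu]
      field_simp
      ring

lemma chernoff_pi {α : Type*} [MeasurableSpace α] (μ : Measure α) [IsProbabilityMeasure μ]
    (k : ℕ) (h : α → ℝ) (hmeas : Measurable h) (c : ℝ) (hc : 0 < c)
    (hbd : ∀ θ, |h θ| ≤ c) (ε : ℝ) (hε : 0 ≤ ε) :
    (Measure.pi fun _ : Fin k => μ) {ω | (k : ℝ) * ε ≤ ∑ r : Fin k, ((∫ θ, h θ ∂μ) - h (ω r))}
      ≤ ENNReal.ofReal (Real.exp (-((k : ℝ) * ε ^ 2) / (2 * c ^ 2))) := by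
  set M : ℝ := ∫ θ, h θ ∂μ with hM
  have hMbd : |M| ≤ c := by
    have h1 : |M| ≤ ∫ θ', |h θ'| ∂μ := by
      simpa [Real.norm_eq_abs] using MeasureTheory.norm_integral_le_integral_norm (μ := μ) h
    have hint : MeasureTheory.Integrable h μ := by
      apply (MeasureTheory.integrable_const c).mono' hmeas.aestronglyMeasurable
      exact Filter.Eventually.of_forall fun θ => by simpa using hbd θ
    have h2 : ∫ θ', |h θ'| ∂μ ≤ ∫ _θ', c ∂μ :=
      MeasureTheory.integral_mono hint.abs (MeasureTheory.integrable_const c) fun θ => hbd θ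
    have h3 : ∫ _θ', c ∂μ = c := by simp
    linarith
  set t : ℝ := ε / c ^ 2 with ht
  have ht0 : 0 ≤ t := div_nonneg hε (by positivity)
  set ψ : α → ℝ := fun θ => Real.exp (t * (M - h θ)) with hψ
  have hψmeas : Measurable ψ := ((measurable_const.sub hmeas).const_mul t).exp
  have hψbd : ∀ θ, ‖ψ θ‖ ≤ Real.exp (t * (2 * c)) := by
    intro θ
    rw [Real.norm_eq_abs, hψ, Real.abs_exp]
    apply Real.exp_le_exp.2
    apply mul_le_mul_of_nonneg_left _ ht0
    have := hbd θ
    rw [abs_le] at this hMbd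
    linarith [this.1, this.2, hMbd.1, hMbd.2]
  have hψint : MeasureTheory.Integrable ψ μ := by
    apply (MeasureTheory.integrable_const (Real.exp (t * (2 * c)))).mono'
      hψmeas.aestronglyMeasurable
    exact Filter.Eventually.of_forall hψbd
  have hψnonneg : 0 ≤ ∫ θ, ψ θ ∂μ := MeasureTheory.integral_nonneg fun θ => Real.exp_nonneg _
  have hψle : ∫ θ, ψ θ ∂μ ≤ Real.exp (t ^ 2 * c ^ 2 / 2) := hoeff_mgf μ h hmeas c hc hbd t
  set X : (Fin k → α) → ℝ := fun ω => ∑ r : Fin k, (M - h (ω r)) with hX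
  letI : MeasureSpace α := ⟨μ⟩
  haveI : IsProbabilityMeasure (volume : Measure α) := ‹IsProbabilityMeasure μ›
  have hvol : (Measure.pi fun _ : Fin k => μ) = (volume : Measure (Fin k → α)) := rfl
  have hexp_prod : ∀ ω : Fin k → α, Real.exp (t * X ω) = ∏ r : Fin k, ψ (ω r) := by
    intro ω
    rw [hX, Finset.mul_sum, Real.exp_sum]
  have hint_exp : MeasureTheory.Integrable (fun ω => Real.exp (t * X ω))
      (Measure.pi fun _ : Fin k => μ) := by
    rw [hvol]
    have := MeasureTheory.Integrable.fintype_prod (ι := Fin k) (f := fun _ => ψ) fun _ => hψint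
    exact this.congr (Filter.Eventually.of_forall fun ω => (hexp_prod ω).symm)
  have hmgf : ProbabilityTheory.mgf X (Measure.pi fun _ : Fin k => μ) t
      = (∫ θ, ψ θ ∂μ) ^ k := by
    rw [ProbabilityTheory.mgf, hvol]
    calc ∫ ω, Real.exp (t * X ω) = ∫ ω : Fin k → α, ∏ r : Fin k, ψ (ω r) := by
          exact MeasureTheory.integral_congr_ae (Filter.Eventually.of_forall hexp_prod)
    _ = (∫ θ, ψ θ) ^ (Fintype.card (Fin k)) := MeasureTheory.integral_fintype_prod_eq_pow ψ
    _ = (∫ θ, ψ θ ∂μ) ^ k := by rw [Fintype.card_fin]; rfl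
  have hbound := ProbabilityTheory.measure_ge_le_exp_mul_mgf (μ := Measure.pi fun _ : Fin k => μ)
    (X := X) ((k : ℝ) * ε) ht0 hint_exp
  have hreal : Real.exp (-t * ((k : ℝ) * ε)) * ProbabilityTheory.mgf X
      (Measure.pi fun _ : Fin k => μ) t ≤ Real.exp (-((k : ℝ) * ε ^ 2) / (2 * c ^ 2)) := by
    rw [hmgf]
    calc Real.exp (-t * ((k : ℝ) * ε)) * (∫ θ, ψ θ ∂μ) ^ k
        ≤ Real.exp (-t * ((k : ℝ) * ε)) * (Real.exp (t ^ 2 * c ^ 2 / 2)) ^ k :=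
          mul_le_mul_of_nonneg_left (pow_le_pow_left₀ hψnonneg hψle k) (Real.exp_nonneg _)
    _ = Real.exp (-t * ((k : ℝ) * ε) + (k : ℝ) * (t ^ 2 * c ^ 2 / 2)) := by
          rw [← Real.exp_nat_mul, ← Real.exp_add]
    _ = Real.exp (-((k : ℝ) * ε ^ 2) / (2 * c ^ 2)) := by
          congr 1
          rw [ht]
          field_simp
          ring
  calc (Measure.pi fun _ : Fin k => μ) {ω | (k : ℝ) * ε ≤ ∑ r : Fin k, (M - h (ω r))}
      = ENNReal.ofReal (((Measure.pi fun _ : Fin k => μ)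
          {ω | (k : ℝ) * ε ≤ X ω}).toReal) := by
        rw [ENNReal.ofReal_toReal (measure_ne_top _ _)]
  _ ≤ ENNReal.ofReal (Real.exp (-((k : ℝ) * ε ^ 2) / (2 * c ^ 2))) :=
        ENNReal.ofReal_le_ofReal (le_trans hbound hreal)


lemma sum_symInit (d k : ℕ) (ω : Fin k → EuclideanSpace ℝ (Fin d))
    (F : EuclideanSpace ℝ (Fin d) → ℝ) :
    ∑ r : Fin (2 * k), F (symInit d k ω r) = 2 * ∑ j : Fin k, F (ω j) := by
  have hcast : k + k = 2 * k := by ring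
  have h1 : ∑ r : Fin (2 * k), F (symInit d k ω r)
      = ∑ i : Fin (k + k), F (symInit d k ω (finCongr hcast i)) :=
    (Fintype.sum_equiv (finCongr hcast) _ _ (fun i => rfl)).symm
  rw [h1, Fin.sum_univ_add]
  have h2 : ∀ j : Fin k, F (symInit d k ω (finCongr hcast (Fin.castAdd k j))) = F (ω j) := by
    intro j
    have hj : ((finCongr hcast (Fin.castAdd k j)) : ℕ) = (j : ℕ) := rfl
    rw [symInit]
    rw [dif_pos (by rw [hj]; exact j.isLt)]
    congr 1
  have h3 : ∀ j : Fin k, F (symInit d k ω (finCongr hcast (Fin.natAdd k j))) = F (ω j) := by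
    intro j
    have hj : ((finCongr hcast (Fin.natAdd k j)) : ℕ) = k + (j : ℕ) := rfl
    rw [symInit]
    rw [dif_neg (by omega)]
    exact congrArg (fun z => F (ω z)) (Fin.ext (by simp only [Fin.val_mk]; omega))
  simp only [h2, h3]
  ring

set_option maxHeartbeats 1000000 in
/-- Proposition 4: kernel positivity near the symmetric initialization. -/
theorem kernel_positivity
    (d n k : ℕ) (hk : 0 < k) (hn : 0 < n)
    (σ : ℝ → ℝ) (K₁ K₂ : ℝ)
    (hσ : ContDiff ℝ 2 σ)
    (hK₁ : ∀ z, |deriv σ z| ≤ K₁)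
    (hK₂ : ∀ z, |deriv (deriv σ) z| ≤ K₂)
    (x : Fin n → EuclideanSpace ℝ (Fin d)) (y : Fin n → ℝ)
    (hx : ∀ i, ‖x i‖ ≤ 1) (hy : ∀ i, y i = 1 ∨ y i = -1)
    (μ₀ : Measure (EuclideanSpace ℝ (Fin d))) [IsProbabilityMeasure μ₀]
    (ρ : ℝ) (hρ : 0 < ρ)
    (v : EuclideanSpace ℝ (Fin d) → EuclideanSpace ℝ (Fin d))
    (hv_meas : Measurable v) (hv_norm : ∀ θ, ‖v θ‖ ≤ 1)
    (hsep : ∀ i, ρ ≤ y i * ∫ θ, deriv σ ⟪θ, x i⟫ * ⟪x i, v θ⟫ ∂μ₀)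
    (β δ : ℝ) (hβ0 : 0 ≤ β) (hβ1 : β < 1)
    (hδ0 : 0 < δ) (hδ1 : δ < 1)
    (hm : 16 * K₁ ^ 2 / ρ ^ 2 * Real.log (2 * n / δ) ≤ (2 * k : ℝ)) :
    ENNReal.ofReal (1 - δ) ≤
      (Measure.pi fun _ : Fin k => μ₀) {ω |
        ∀ Θ : Fin (2 * k) → EuclideanSpace ℝ (Fin d),
          n21 d (2 * k) (fun r => Θ r - symInit d k ω r) ≤ (2 * k : ℝ) * ρ / (4 * K₂) →
          ρ ^ 2 / (16 * (2 * k : ℝ) ^ (2 * β - 1)) *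
              (L1norm d (2 * k) n β σ (symSigns k) x y Θ) ^ 2 ≤
            Qker d (2 * k) n β σ (symSigns k) x y Θ} := by
  classical
  have hK₁0 : 0 ≤ K₁ := le_trans (abs_nonneg _) (hK₁ 0)
  have hK₂0 : 0 ≤ K₂ := le_trans (abs_nonneg _) (hK₂ 0)
  have hy1 : ∀ i, |y i| = 1 := fun i => by rcases hy i with h | h <;> simp [h]
  set H : Fin n → EuclideanSpace ℝ (Fin d) → ℝ :=
    fun i θ => y i * (deriv σ ⟪θ, x i⟫ * ⟪x i, v θ⟫) with hH
  have hHbd : ∀ i θ, |H i θ| ≤ K₁ := by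
    intro i θ
    rw [hH]
    simp only
    rw [abs_mul, abs_mul, hy1 i, one_mul]
    have h1 : |⟪x i, v θ⟫| ≤ 1 := by
      refine le_trans (abs_real_inner_le_norm _ _) ?_
      nlinarith [hx i, hv_norm θ, norm_nonneg (x i), norm_nonneg (v θ)]
    calc |deriv σ ⟪θ, x i⟫| * |⟪x i, v θ⟫| ≤ K₁ * 1 :=
          mul_le_mul (hK₁ _) h1 (abs_nonneg _) hK₁0
    _ = K₁ := mul_one K₁
  have hσd_cont : Continuous (deriv σ) := hσ.continuous_deriv one_le_two
  have hHmeas : ∀ i, Measurable (H i) := by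
    intro i
    apply measurable_const.mul
    apply Measurable.mul
    · exact (hσd_cont.comp (continuous_id.inner continuous_const)).measurable
    · exact Measurable.inner measurable_const hv_meas
  have hK₁pos : 0 < K₁ := by
    rcases eq_or_lt_of_le hK₁0 with h0 | h; swap
    · exact h
    exfalso
    have i0 : Fin n := ⟨0, hn⟩
    have hz : ∀ z, deriv σ z = 0 := fun z =>
      abs_eq_zero.1 (le_antisymm (by rw [← h0] at hK₁; exact hK₁ z) (abs_nonneg _))
    have : (∫ θ, deriv σ ⟪θ, x i0⟫ * ⟪x i0, v θ⟫ ∂μ₀) = 0 := by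
      have : (fun θ => deriv σ ⟪θ, x i0⟫ * ⟪x i0, v θ⟫) = fun _ => (0:ℝ) := by
        funext θ; rw [hz]; ring
      rw [this, MeasureTheory.integral_zero]
    have h2 := hsep i0
    rw [this, mul_zero] at h2
    linarith
  have hHint : ∀ i, Integrable (H i) μ₀ := by
    intro i
    apply (MeasureTheory.integrable_const K₁).mono' (hHmeas i).aestronglyMeasurable
    exact Filter.Eventually.of_forall fun θ => by simpa using hHbd i θ
  set EH : Fin n → ℝ := fun i => ∫ θ, H i θ ∂μ₀ with hEH
  have hEHρ : ∀ i, ρ ≤ EH i := by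
    intro i
    rw [hEH]
    simp only [hH]
    rw [MeasureTheory.integral_const_mul]
    exact hsep i
  set Gset : Set (Fin k → EuclideanSpace ℝ (Fin d)) :=
    {ω | ∀ i : Fin n, (k : ℝ) * (ρ/2) ≤ ∑ r : Fin k, H i (ω r)} with hGset
  -- measure bound
  have hGlow : ENNReal.ofReal (1 - δ) ≤ (Measure.pi fun _ : Fin k => μ₀) Gset := by
    set μpi := (Measure.pi fun _ : Fin k => μ₀) with hμpi
    have hbad : ∀ i : Fin n,
        μpi {ω | (k : ℝ) * (ρ/2) ≤ ∑ r : Fin k, ((∫ θ, H i θ ∂μ₀) - H i (ω r))}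
          ≤ ENNReal.ofReal (δ / (2 * n)) := by
      intro i
      refine le_trans (chernoff_pi μ₀ k (H i) (hHmeas i) K₁ hK₁pos (hHbd i) (ρ/2)
        (by positivity)) (ENNReal.ofReal_le_ofReal ?_)
      have hq : (0:ℝ) < 2 * n / δ := by positivity
      have hc : (0:ℝ) < 16 * K₁ ^ 2 / ρ ^ 2 := by positivity
      have hlog : Real.log (2 * n / δ) ≤ (k : ℝ) * (ρ/2) ^ 2 / (2 * K₁ ^ 2) := by
        have h1 : Real.log (2 * n / δ) ≤ (2 * k : ℝ) / (16 * K₁ ^ 2 / ρ ^ 2) :=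
          (le_div_iff₀' hc).2 hm
        refine le_trans h1 (le_of_eq ?_)
        field_simp
        ring
      have h2 : -((k : ℝ) * (ρ/2) ^ 2) / (2 * K₁ ^ 2) ≤ - Real.log (2 * n / δ) := by
        rw [neg_div]
        exact neg_le_neg (by linarith [hlog, div_nonneg (by positivity : (0:ℝ) ≤ (k:ℝ) * (ρ/2)^2) (by positivity : (0:ℝ) ≤ 2 * K₁ ^2)])
      calc Real.exp (-((k : ℝ) * (ρ/2) ^ 2) / (2 * K₁ ^ 2))
          ≤ Real.exp (- Real.log (2 * n / δ)) := Real.exp_le_exp.2 h2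
      _ = δ / (2 * n) := by
          rw [Real.exp_neg, Real.exp_log hq, inv_div]
    have hsub : Gsetᶜ ⊆ ⋃ i : Fin n,
        {ω | (k : ℝ) * (ρ/2) ≤ ∑ r : Fin k, ((∫ θ, H i θ ∂μ₀) - H i (ω r))} := by
      intro ω hω
      rw [hGset] at hω
      simp only [Set.mem_compl_iff, Set.mem_setOf_eq, not_forall, not_le] at hω
      obtain ⟨i, hi⟩ := hω
      refine Set.mem_iUnion.2 ⟨i, ?_⟩
      simp only [Set.mem_setOf_eq]
      rw [Finset.sum_sub_distrib, Finset.sum_const, Finset.card_univ, Fintype.card_fin,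
        nsmul_eq_mul]
      have h3 : (k : ℝ) * ρ ≤ (k : ℝ) * (∫ θ, H i θ ∂μ₀) :=
        mul_le_mul_of_nonneg_left (hEHρ i) (Nat.cast_nonneg k)
      have h4 : (k : ℝ) * ρ = (k : ℝ) * (ρ/2) + (k : ℝ) * (ρ/2) := by ring
      linarith [hi, h3, h4]
    have hGc : μpi Gsetᶜ ≤ ENNReal.ofReal δ := by
      calc μpi Gsetᶜ ≤ μpi (⋃ i : Fin n,
          {ω | (k : ℝ) * (ρ/2) ≤ ∑ r : Fin k, ((∫ θ, H i θ ∂μ₀) - H i (ω r))}) :=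
            measure_mono hsub
      _ ≤ ∑' i : Fin n, μpi {ω | (k : ℝ) * (ρ/2)
            ≤ ∑ r : Fin k, ((∫ θ, H i θ ∂μ₀) - H i (ω r))} := measure_iUnion_le _
      _ = ∑ i : Fin n, μpi {ω | (k : ℝ) * (ρ/2)
            ≤ ∑ r : Fin k, ((∫ θ, H i θ ∂μ₀) - H i (ω r))} := tsum_fintype _
      _ ≤ ∑ _i : Fin n, ENNReal.ofReal (δ / (2 * n)) := Finset.sum_le_sum fun i _ => hbad i
      _ = (n : ENNReal) * ENNReal.ofReal (δ / (2 * n)) := by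
            rw [Finset.sum_const, Finset.card_univ, Fintype.card_fin, nsmul_eq_mul]
      _ = ENNReal.ofReal ((n : ℝ) * (δ / (2 * n))) := by
            rw [ENNReal.ofReal_mul (Nat.cast_nonneg n), ENNReal.ofReal_natCast]
      _ ≤ ENNReal.ofReal δ := by
            apply ENNReal.ofReal_le_ofReal
            have hn' : (0:ℝ) < n := by exact_mod_cast hn
            rw [show (n : ℝ) * (δ / (2 * n)) = δ / 2 by field_simp]
            linarith
    have h1 : (1 : ENNReal) ≤ μpi Gset + μpi Gsetᶜ := by
      calc (1 : ENNReal) = μpi Set.univ := (measure_univ).symm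
      _ = μpi (Gset ∪ Gsetᶜ) := by rw [Set.union_compl_self]
      _ ≤ μpi Gset + μpi Gsetᶜ := measure_union_le _ _
    have h2 : ENNReal.ofReal (1 - δ) + ENNReal.ofReal δ = 1 := by
      rw [← ENNReal.ofReal_add (by linarith) hδ0.le]
      norm_num
    have h3 : ENNReal.ofReal (1 - δ) + ENNReal.ofReal δ ≤ μpi Gset + ENNReal.ofReal δ := by
      rw [h2]
      exact le_trans h1 (by gcongr)
    exact (ENNReal.add_le_add_iff_right ENNReal.ofReal_ne_top).1 h3
  refine le_trans hGlow (measure_mono ?_)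
  intro ω hω
  simp only [Set.mem_setOf_eq]
  intro Θ hball
  have hωG : ∀ i : Fin n, (k : ℝ) * (ρ/2) ≤ ∑ r : Fin k, H i (ω r) := hω
  have hm0 : (0:ℝ) < ((2 * k : ℕ) : ℝ) := by
    have : 0 < 2 * k := by omega
    exact_mod_cast this
  have hbase : ((2 * k : ℕ) : ℝ) = 2 * (k : ℝ) := by push_cast; ring
  have hinn1 : ∀ (i : Fin n) θ, |⟪x i, v θ⟫| ≤ 1 := by
    intro i θ
    refine le_trans (abs_real_inner_le_norm _ _) ?_
    nlinarith [hx i, hv_norm θ, norm_nonneg (x i), norm_nonneg (v θ)]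
  set P : ℝ := ((2 * k : ℕ) : ℝ) ^ (-β) with hP
  have hPnn : 0 ≤ P := Real.rpow_nonneg hm0.le _
  set Θ0 : Fin (2*k) → EuclideanSpace ℝ (Fin d) := symInit d k ω with hΘ0
  set gv : Fin n → ℝ := fun i => gval d (2*k) n β σ (symSigns k) x y Θ i with hgv
  set G : Fin (2*k) → EuclideanSpace ℝ (Fin d) := fun r => (1 / n : ℝ) •
    ∑ i, (gv i * (symSigns k r * P * deriv σ ⟪Θ r, x i⟫)) • x i with hG
  have hQker : Qker d (2*k) n β σ (symSigns k) x y Θ = ∑ r, ‖G r‖^2 := rfl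
  set T : Fin n → ℝ := fun i => ∑ r : Fin (2*k), deriv σ ⟪Θ r, x i⟫ * ⟪x i, v (Θ0 r)⟫ with hT
  set s : ℝ := ∑ r : Fin (2*k), ⟪G r, symSigns k r • v (Θ0 r)⟫ with hs
  have ha2 : ∀ r : Fin (2*k), symSigns k r * symSigns k r = 1 := by
    intro r; rw [symSigns]; split <;> norm_num
  have haabs : ∀ r : Fin (2*k), |symSigns k r| = 1 := by
    intro r; rw [symSigns]; split <;> norm_num
  have hinner : ∀ r : Fin (2*k), ⟪G r, symSigns k r • v (Θ0 r)⟫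
      = (1/n : ℝ) * ∑ i, gv i * (P * (deriv σ ⟪Θ r, x i⟫ * ⟪x i, v (Θ0 r)⟫)) := by
    intro r
    rw [hG]
    simp only
    rw [real_inner_smul_left, sum_inner]
    congr 1
    refine Finset.sum_congr rfl fun i _ => ?_
    rw [real_inner_smul_left, real_inner_smul_right]
    have h2 := ha2 r
    linear_combination (gv i * (P * (deriv σ ⟪Θ r, x i⟫ * ⟪x i, v (Θ0 r)⟫))) * h2
  have hs_eq : s = (1/n : ℝ) * (P * ∑ i, gv i * T i) := by
    calc s = ∑ r : Fin (2*k), (1/n : ℝ)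
          * ∑ i, gv i * (P * (deriv σ ⟪Θ r, x i⟫ * ⟪x i, v (Θ0 r)⟫)) := by
          rw [hs]; exact Finset.sum_congr rfl fun r _ => hinner r
    _ = (1/n : ℝ) * ∑ r : Fin (2*k),
          ∑ i, gv i * (P * (deriv σ ⟪Θ r, x i⟫ * ⟪x i, v (Θ0 r)⟫)) := by
          rw [← Finset.mul_sum]
    _ = (1/n : ℝ) * ∑ i, ∑ r : Fin (2*k),
          gv i * (P * (deriv σ ⟪Θ r, x i⟫ * ⟪x i, v (Θ0 r)⟫)) := by
          rw [Finset.sum_comm]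
    _ = (1/n : ℝ) * (P * ∑ i, gv i * T i) := by
          congr 1
          rw [Finset.mul_sum]
          refine Finset.sum_congr rfl fun i _ => ?_
          rw [hT]
          simp only
          rw [Finset.mul_sum, Finset.mul_sum]
          exact Finset.sum_congr rfl fun r _ => by ring
  have hsq : s^2 ≤ ((2*k : ℕ) : ℝ) * ∑ r, ‖G r‖^2 := by
    have h1 : |s| ≤ ∑ r : Fin (2*k), ‖G r‖ := by
      rw [hs]
      refine le_trans (Finset.abs_sum_le_sum_abs _ _) (Finset.sum_le_sum fun r _ => ?_)
      refine le_trans (abs_real_inner_le_norm _ _) ?_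
      have hw : ‖symSigns k r • v (Θ0 r)‖ ≤ 1 := by
        rw [norm_smul, Real.norm_eq_abs, haabs r, one_mul]; exact hv_norm _
      calc ‖G r‖ * ‖symSigns k r • v (Θ0 r)‖ ≤ ‖G r‖ * 1 :=
            mul_le_mul_of_nonneg_left hw (norm_nonneg _)
      _ = ‖G r‖ := mul_one _
    have h2 : (∑ r : Fin (2*k), ‖G r‖)^2 ≤ ((2*k : ℕ) : ℝ) * ∑ r, ‖G r‖^2 := by
      have h3 := sq_sum_le_card_mul_sum_sq
        (s := (Finset.univ : Finset (Fin (2*k)))) (f := fun r => ‖G r‖)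
      simpa using h3
    calc s^2 = |s|^2 := (sq_abs s).symm
    _ ≤ (∑ r : Fin (2*k), ‖G r‖)^2 := pow_le_pow_left₀ (abs_nonneg s) h1 2
    _ ≤ _ := h2
  have hσ1 : ContDiff ℝ 1 (deriv σ) := by
    have h2 : ContDiff ℝ ((1 : WithTop ℕ∞) + 1) σ := hσ.of_le (by norm_num)
    exact (contDiff_succ_iff_deriv.mp h2).2.2
  have hLip : ∀ p q : ℝ, |deriv σ p - deriv σ q| ≤ K₂ * |p - q| := by
    intro p q
    have h1 : ∀ z ∈ (Set.univ : Set ℝ), DifferentiableAt ℝ (deriv σ) z :=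
      fun z _ => (hσ1.differentiable one_ne_zero) z
    have h2 : ∀ z ∈ (Set.univ : Set ℝ), ‖deriv (deriv σ) z‖ ≤ K₂ :=
      fun z _ => by rw [Real.norm_eq_abs]; exact hK₂ z
    simpa [Real.norm_eq_abs] using Convex.norm_image_sub_le_of_norm_deriv_le h1 h2 convex_univ
      (Set.mem_univ q) (Set.mem_univ p)
  have hyT : ∀ i, ((2*k : ℕ) : ℝ) * ρ / 4 ≤ y i * T i := by
    intro i
    set T0 : ℝ := ∑ r : Fin (2*k), deriv σ ⟪Θ0 r, x i⟫ * ⟪x i, v (Θ0 r)⟫ with hT0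
    have hT0low : ((2*k : ℕ) : ℝ) * ρ / 2 ≤ y i * T0 := by
      have h1 : y i * T0 = ∑ r : Fin (2*k), H i (Θ0 r) := by
        rw [hT0, Finset.mul_sum]
      rw [h1, hΘ0, sum_symInit d k ω (H i)]
      have h3 := hωG i
      rw [hbase]
      linarith
    have hdiffbd : |T i - T0| ≤ K₂ * n21 d (2*k) (fun r => Θ r - Θ0 r) := by
      rw [hT, hT0]
      simp only
      rw [← Finset.sum_sub_distrib]
      refine le_trans (Finset.abs_sum_le_sum_abs _ _) ?_
      rw [n21, Finset.mul_sum]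
      refine Finset.sum_le_sum fun r _ => ?_
      rw [← sub_mul, abs_mul]
      have h5 : |deriv σ ⟪Θ r, x i⟫ - deriv σ ⟪Θ0 r, x i⟫| ≤ K₂ * ‖Θ r - Θ0 r‖ := by
        refine le_trans (hLip _ _) ?_
        apply mul_le_mul_of_nonneg_left _ hK₂0
        rw [← inner_sub_left]
        refine le_trans (abs_real_inner_le_norm _ _) ?_
        calc ‖Θ r - Θ0 r‖ * ‖x i‖ ≤ ‖Θ r - Θ0 r‖ * 1 :=
              mul_le_mul_of_nonneg_left (hx i) (norm_nonneg _)
        _ = _ := mul_one _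
      calc |deriv σ ⟪Θ r, x i⟫ - deriv σ ⟪Θ0 r, x i⟫| * |⟪x i, v (Θ0 r)⟫|
          ≤ (K₂ * ‖Θ r - Θ0 r‖) * 1 :=
            mul_le_mul h5 (hinn1 i (Θ0 r)) (abs_nonneg _) (by positivity)
      _ = K₂ * ‖Θ r - Θ0 r‖ := mul_one _
    have hK₂ball : K₂ * n21 d (2*k) (fun r => Θ r - Θ0 r) ≤ ((2*k : ℕ) : ℝ) * ρ / 4 := by
      rcases eq_or_lt_of_le hK₂0 with h0 | h0
      · rw [← h0, zero_mul]; positivity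
      · have h7 : K₂ * n21 d (2*k) (fun r => Θ r - Θ0 r)
            ≤ K₂ * (2 * (k:ℝ) * ρ / (4 * K₂)) := mul_le_mul_of_nonneg_left hball h0.le
        refine le_trans h7 (le_of_eq ?_)
        rw [hbase]
        field_simp
    have h8 : |y i * (T i - T0)| = |T i - T0| := by rw [abs_mul, hy1 i, one_mul]
    have h9 : y i * T i = y i * T0 + y i * (T i - T0) := by ring
    have h10 := neg_abs_le (y i * (T i - T0))
    rw [h8] at h10
    have hmr : ((2*k:ℕ):ℝ) * ρ / 2 = ((2*k:ℕ):ℝ)*ρ/4 + ((2*k:ℕ):ℝ)*ρ/4 := by ring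
    linarith
  have hgvT : ∀ i, |gv i| * (((2*k:ℕ):ℝ) * ρ / 4) ≤ (- gv i) * T i := by
    intro i
    set D : ℝ := 1 + Real.exp (y i * fnet d (2*k) β σ (symSigns k) Θ (x i)) with hD
    have hDpos : 0 < D := by rw [hD]; positivity
    have hgvi : gv i = - y i / D := rfl
    have habs : |gv i| = 1 / D := by
      rw [hgvi, abs_div, abs_neg, hy1 i, abs_of_pos hDpos]
    have hneg : - gv i = y i / D := by rw [hgvi]; ring
    rw [habs, hneg, div_mul_eq_mul_div, div_mul_eq_mul_div, one_mul]
    exact (div_le_div_iff_of_pos_right hDpos).2 (hyT i)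
  have hL1 : L1norm d (2*k) n β σ (symSigns k) x y Θ = (1/n : ℝ) * ∑ i, |gv i| := rfl
  have hL1nn : 0 ≤ L1norm d (2*k) n β σ (symSigns k) x y Θ := by
    rw [hL1]; positivity
  set B : ℝ := P * (((2*k:ℕ):ℝ) * ρ / 4) * L1norm d (2*k) n β σ (symSigns k) x y Θ with hB
  have hBnn : 0 ≤ B := by
    rw [hB]
    exact mul_nonneg (mul_nonneg hPnn (by positivity)) hL1nn
  have hBs : B ≤ - s := by
    have h1 : -s = (1/n : ℝ) * (P * ∑ i, (- gv i) * T i) := by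
      rw [hs_eq, show ∑ i, (-gv i) * T i = - ∑ i, gv i * T i from by
        rw [← Finset.sum_neg_distrib]; exact Finset.sum_congr rfl fun i _ => by ring]
      ring
    rw [h1]
    have h2 : ∑ i, |gv i| * (((2*k:ℕ):ℝ)*ρ/4) ≤ ∑ i, (- gv i) * T i :=
      Finset.sum_le_sum fun i _ => hgvT i
    calc B = (1/n : ℝ) * (P * ∑ i, |gv i| * (((2*k:ℕ):ℝ)*ρ/4)) := by
          rw [hB, hL1, ← Finset.sum_mul]; ring
    _ ≤ (1/n : ℝ) * (P * ∑ i, (- gv i) * T i) := by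
          apply mul_le_mul_of_nonneg_left _ (by positivity)
          exact mul_le_mul_of_nonneg_left h2 hPnn
  have hQlow : B^2 / ((2*k:ℕ):ℝ) ≤ Qker d (2*k) n β σ (symSigns k) x y Θ := by
    rw [hQker, div_le_iff₀ hm0]
    have hBs2 : B^2 ≤ s^2 := by
      have h1 : B ≤ |s| := le_trans hBs (neg_le_abs s)
      calc B^2 ≤ |s|^2 := pow_le_pow_left₀ hBnn h1 2
      _ = s^2 := sq_abs s
    calc B^2 ≤ s^2 := hBs2
    _ ≤ ((2*k : ℕ) : ℝ) * ∑ r, ‖G r‖^2 := hsq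
    _ = (∑ r, ‖G r‖^2) * ((2*k : ℕ) : ℝ) := mul_comm _ _
  refine le_trans (le_of_eq ?_) hQlow
  have hYpos : (0:ℝ) < (2 * (k:ℝ)) ^ (2*β - 1) := Real.rpow_pos_of_pos (by positivity) _
  have hkey : (2 * (k:ℝ)) ^ (2*β - 1) * (P^2 * ((2*k:ℕ):ℝ)) = 1 := by
    rw [hP, sq, ← Real.rpow_add hm0, ← Real.rpow_add_one hm0.ne', ← hbase,
      ← Real.rpow_add hm0]
    rw [show (2*β - 1) + (-β + -β + 1) = 0 by ring, Real.rpow_zero]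
  rw [hB, hbase, div_mul_eq_mul_div, div_eq_div_iff (by positivity) (by positivity)]
  rw [hbase] at hkey
  linear_combination (-(ρ^2 * L1norm d (2*k) n β σ (symSigns k) x y Θ ^ 2 * (2 * (k:ℝ)))) * hkey
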